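/- Generic tensors of rank 2 in ℂ² ⊗ ℂ² ⊗ ℂ³ are identifiable: there exists a nonzero polynomial P on the parameter space (ℂ² × ℂ² × ℂ³)² such that for every parameter (a_0, b_0, c_0, a_1, b_1, c_1) with P ≠ 0, every multiset of 2 nonzero decomposable tensors in ℂ² ⊗ ℂ² ⊗ ℂ³ whose sum equals T = a_0 ⊗ b_0 ⊗ c_0 + a_1 ⊗ b_1 ⊗ c_1 equals the multiset { a_0 ⊗ b_0 ⊗ c_0, a_1 ⊗ b_1 ⊗ c_1 }. -/

import Mathlib

open scoped TensorProduct

/-- The triple tensor product `ℂ² ⊗ ℂ² ⊗ ℂ³`, the affine cone over the Segre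
embedding of `ℙ¹ × ℙ¹ × ℙ²` in `ℙ¹¹`. -/
abbrev TripleTensor := (Fin 2 → ℂ) ⊗[ℂ] ((Fin 2 → ℂ) ⊗[ℂ] (Fin 3 → ℂ))

/-- A tensor in `ℂ² ⊗ ℂ² ⊗ ℂ³` is decomposable if it is a pure tensor `a ⊗ b ⊗ c`. -/
def TripleDecomposable (t : TripleTensor) : Prop :=
  ∃ (a b : Fin 2 → ℂ) (c : Fin 3 → ℂ), t = a ⊗ₜ[ℂ] (b ⊗ₜ[ℂ] c)

/-! ### Auxiliary machinery -/

/-- The standard basis of the triple tensor product. -/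
noncomputable def TB : Module.Basis (Fin 2 × Fin 2 × Fin 3) ℂ TripleTensor :=
  (Pi.basisFun ℂ (Fin 2)).tensorProduct
    ((Pi.basisFun ℂ (Fin 2)).tensorProduct (Pi.basisFun ℂ (Fin 3)))

lemma TB_repr_tmul (u v : Fin 2 → ℂ) (w : Fin 3 → ℂ) (i j : Fin 2) (k : Fin 3) :
    TB.repr (u ⊗ₜ (v ⊗ₜ w)) (i, j, k) = u i * (v j * w k) := by
  simp [TB, Module.Basis.tensorProduct_repr_tmul_apply]; ring

lemma TB_repr_add (s t : TripleTensor) (p : Fin 2 × Fin 2 × Fin 3) :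
    TB.repr (s + t) p = TB.repr s p + TB.repr t p := by
  rw [LinearEquiv.map_add]; rfl

lemma tmul_eq_of_coords (u v u' v' : Fin 2 → ℂ) (w w' : Fin 3 → ℂ)
    (H : ∀ (i j : Fin 2) (k : Fin 3), u i * (v j * w k) = u' i * (v' j * w' k)) :
    u ⊗ₜ[ℂ] (v ⊗ₜ[ℂ] w) = u' ⊗ₜ[ℂ] (v' ⊗ₜ[ℂ] w') := by
  apply TB.repr.injective
  ext p
  obtain ⟨i, j, k⟩ := p
  rw [TB_repr_tmul, TB_repr_tmul]
  exact H i j k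

/-- The key scalar lemma: uniqueness of the rank-2 decomposition in coordinates. -/
lemma key_scalar (a b : Fin 2 → Fin 2 → ℂ) (c : Fin 2 → Fin 3 → ℂ)
    (hA : a 0 0 * a 1 1 - a 0 1 * a 1 0 ≠ 0)
    (hB : b 0 0 * b 1 1 - b 0 1 * b 1 0 ≠ 0)
    (hG : c 0 0 * c 1 1 - c 0 1 * c 1 0 ≠ 0)
    (x y x' y' : Fin 2 → ℂ) (z z' : Fin 3 → ℂ)
    (h : ∀ (i j : Fin 2) (k : Fin 3), x i * (y j * z k) + x' i * (y' j * z' k)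
        = a 0 i * (b 0 j * c 0 k) + a 1 i * (b 1 j * c 1 k)) :
    ((∀ (i j : Fin 2) (k : Fin 3), x i * (y j * z k) = a 0 i * (b 0 j * c 0 k)) ∧
     (∀ (i j : Fin 2) (k : Fin 3), x' i * (y' j * z' k) = a 1 i * (b 1 j * c 1 k))) ∨
    ((∀ (i j : Fin 2) (k : Fin 3), x i * (y j * z k) = a 1 i * (b 1 j * c 1 k)) ∧
     (∀ (i j : Fin 2) (k : Fin 3), x' i * (y' j * z' k) = a 0 i * (b 0 j * c 0 k))) := by
  set A := a 0 0 * a 1 1 - a 0 1 * a 1 0 with hAdef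
  set B := b 0 0 * b 1 1 - b 0 1 * b 1 0 with hBdef
  set G := c 0 0 * c 1 1 - c 0 1 * c 1 0 with hGdef
  have hAB : A * B ≠ 0 := mul_ne_zero hA hB
  set S := c 1 1 * z 0 - c 1 0 * z 1 with hSdef
  set S' := c 1 1 * z' 0 - c 1 0 * z' 1 with hS'def
  set T := c 0 0 * z 1 - c 0 1 * z 0 with hTdef
  set T' := c 0 0 * z' 1 - c 0 1 * z' 0 with hT'def
  have E0 : ∀ i j : Fin 2, S * (x i * y j) + S' * (x' i * y' j) = G * (a 0 i * b 0 j) := by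
    intro i j
    rw [hSdef, hS'def, hGdef]
    linear_combination c 1 1 * h i j 0 - c 1 0 * h i j 1
  have E1 : ∀ i j : Fin 2, T * (x i * y j) + T' * (x' i * y' j) = G * (a 1 i * b 1 j) := by
    intro i j
    rw [hTdef, hT'def, hGdef]
    linear_combination c 0 0 * h i j 1 - c 0 1 * h i j 0
  set Dx := x 0 * x' 1 - x 1 * x' 0 with hDxdef
  set Dy := y 0 * y' 1 - y 1 * y' 0 with hDydef
  have I1 : S * S' * Dx * Dy = 0 := by
    rw [hDxdef, hDydef]
    linear_combination (S * (x 0 * y 0) + S' * (x' 0 * y' 0)) * E0 1 1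
      + (G * (a 0 1 * b 0 1)) * E0 0 0
      - (S * (x 0 * y 1) + S' * (x' 0 * y' 1)) * E0 1 0
      - (G * (a 0 1 * b 0 0)) * E0 0 1
  have I2 : T * T' * Dx * Dy = 0 := by
    rw [hDxdef, hDydef]
    linear_combination (T * (x 0 * y 0) + T' * (x' 0 * y' 0)) * E1 1 1
      + (G * (a 1 1 * b 1 1)) * E1 0 0
      - (T * (x 0 * y 1) + T' * (x' 0 * y' 1)) * E1 1 0
      - (G * (a 1 1 * b 1 0)) * E1 0 1
  have E2 : ∀ i j : Fin 2, (S + T) * (x i * y j) + (S' + T') * (x' i * y' j)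
      = G * (a 0 i * b 0 j + a 1 i * b 1 j) := by
    intro i j; linear_combination E0 i j + E1 i j
  have I3 : (S + T) * (S' + T') * Dx * Dy = G ^ 2 * (A * B) := by
    rw [hDxdef, hDydef, hAdef, hBdef]
    linear_combination ((S + T) * (x 0 * y 0) + (S' + T') * (x' 0 * y' 0)) * E2 1 1
      + (G * (a 0 1 * b 0 1 + a 1 1 * b 1 1)) * E2 0 0
      - ((S + T) * (x 0 * y 1) + (S' + T') * (x' 0 * y' 1)) * E2 1 0
      - (G * (a 0 1 * b 0 0 + a 1 1 * b 1 0)) * E2 0 1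
  have hRHS : G ^ 2 * (A * B) ≠ 0 := mul_ne_zero (pow_ne_zero 2 hG) hAB
  rw [← I3] at hRHS
  have hST : S + T ≠ 0 := fun e => hRHS (by rw [e]; ring)
  have hST' : S' + T' ≠ 0 := fun e => hRHS (by rw [e]; ring)
  have hDx : Dx ≠ 0 := fun e => hRHS (by rw [e]; ring)
  have hDy : Dy ≠ 0 := fun e => hRHS (by rw [e]; ring)
  have hSS' : S * S' = 0 := by
    rcases mul_eq_zero.1 I1 with h1 | h1
    · rcases mul_eq_zero.1 h1 with h2 | h2
      · exact h2
      · exact absurd h2 hDx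
    · exact absurd h1 hDy
  have hTT' : T * T' = 0 := by
    rcases mul_eq_zero.1 I2 with h1 | h1
    · rcases mul_eq_zero.1 h1 with h2 | h2
      · exact h2
      · exact absurd h2 hDx
    · exact absurd h1 hDy
  rcases mul_eq_zero.1 hSS' with hS0 | hS'0
  · -- S = 0 : swapped case
    have hT'0 : T' = 0 := by
      rcases mul_eq_zero.1 hTT' with h1 | h1
      · exact absurd (by rw [hS0, h1]; ring : S + T = 0) hST
      · exact h1
    have hTne : T ≠ 0 := fun e => hST (by rw [hS0, e]; ring)
    have hS'ne : S' ≠ 0 := fun e => hST' (by rw [hT'0, e]; ring)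
    have hE1' : ∀ i j : Fin 2, T * (x i * y j) = G * (a 1 i * b 1 j) := by
      intro i j; linear_combination E1 i j - (x' i * y' j) * hT'0
    have hE0' : ∀ i j : Fin 2, S' * (x' i * y' j) = G * (a 0 i * b 0 j) := by
      intro i j; linear_combination E0 i j - (x i * y j) * hS0
    have q : ∀ (i j : Fin 2) (k : Fin 3),
        (a 1 i * b 1 j) * (S' * (G * z k - T * c 1 k))
          + (a 0 i * b 0 j) * (T * (G * z' k - S' * c 0 k)) = 0 := by
      intro i j k
      rw [hGdef]
      linear_combination (T * S') * h i j k - (S' * z k) * hE1' i j - (T * z' k) * hE0' i j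
    have key1 : ∀ k : Fin 3, G * z k = T * c 1 k := by
      intro k
      have q2 : (A * B) * (S' * (G * z k - T * c 1 k)) = 0 := by
        rw [hAdef, hBdef]
        linear_combination (a 0 1 * b 0 1) * q 0 0 k - (a 0 1 * b 0 0) * q 0 1 k
          - (a 0 0 * b 0 1) * q 1 0 k + (a 0 0 * b 0 0) * q 1 1 k
      rcases mul_eq_zero.1 q2 with h1 | h1
      · exact absurd h1 hAB
      · rcases mul_eq_zero.1 h1 with h2 | h2
        · exact absurd h2 hS'ne
        · linear_combination h2
    have key2 : ∀ k : Fin 3, G * z' k = S' * c 0 k := by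
      intro k
      have q2 : (A * B) * (T * (G * z' k - S' * c 0 k)) = 0 := by
        rw [hAdef, hBdef]
        linear_combination (a 1 1 * b 1 1) * q 0 0 k - (a 1 1 * b 1 0) * q 0 1 k
          - (a 1 0 * b 1 1) * q 1 0 k + (a 1 0 * b 1 0) * q 1 1 k
      rcases mul_eq_zero.1 q2 with h1 | h1
      · exact absurd h1 hAB
      · rcases mul_eq_zero.1 h1 with h2 | h2
        · exact absurd h2 hTne
        · linear_combination h2
    refine Or.inr ⟨fun i j k => ?_, fun i j k => ?_⟩
    · have e : (T * G) * (x i * (y j * z k)) = (T * G) * (a 1 i * (b 1 j * c 1 k)) := by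
        linear_combination (G * z k) * hE1' i j + (G * (a 1 i * b 1 j)) * key1 k
      exact mul_left_cancel₀ (mul_ne_zero hTne hG) e
    · have e : (S' * G) * (x' i * (y' j * z' k)) = (S' * G) * (a 0 i * (b 0 j * c 0 k)) := by
        linear_combination (G * z' k) * hE0' i j + (G * (a 0 i * b 0 j)) * key2 k
      exact mul_left_cancel₀ (mul_ne_zero hS'ne hG) e
  · -- S' = 0 : identity case
    have hT0 : T = 0 := by
      rcases mul_eq_zero.1 hTT' with h1 | h1
      · exact h1
      · exact absurd (by rw [hS'0, h1]; ring : S' + T' = 0) hST'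
    have hSne : S ≠ 0 := fun e => hST (by rw [hT0, e]; ring)
    have hT'ne : T' ≠ 0 := fun e => hST' (by rw [hS'0, e]; ring)
    have hE0' : ∀ i j : Fin 2, S * (x i * y j) = G * (a 0 i * b 0 j) := by
      intro i j; linear_combination E0 i j - (x' i * y' j) * hS'0
    have hE1' : ∀ i j : Fin 2, T' * (x' i * y' j) = G * (a 1 i * b 1 j) := by
      intro i j; linear_combination E1 i j - (x i * y j) * hT0
    have q : ∀ (i j : Fin 2) (k : Fin 3),
        (a 0 i * b 0 j) * (T' * (G * z k - S * c 0 k))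
          + (a 1 i * b 1 j) * (S * (G * z' k - T' * c 1 k)) = 0 := by
      intro i j k
      rw [hGdef]
      linear_combination (S * T') * h i j k - (T' * z k) * hE0' i j - (S * z' k) * hE1' i j
    have key1 : ∀ k : Fin 3, G * z k = S * c 0 k := by
      intro k
      have q2 : (A * B) * (T' * (G * z k - S * c 0 k)) = 0 := by
        rw [hAdef, hBdef]
        linear_combination (a 1 1 * b 1 1) * q 0 0 k - (a 1 1 * b 1 0) * q 0 1 k
          - (a 1 0 * b 1 1) * q 1 0 k + (a 1 0 * b 1 0) * q 1 1 k
      rcases mul_eq_zero.1 q2 with h1 | h1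
      · exact absurd h1 hAB
      · rcases mul_eq_zero.1 h1 with h2 | h2
        · exact absurd h2 hT'ne
        · linear_combination h2
    have key2 : ∀ k : Fin 3, G * z' k = T' * c 1 k := by
      intro k
      have q2 : (A * B) * (S * (G * z' k - T' * c 1 k)) = 0 := by
        rw [hAdef, hBdef]
        linear_combination (a 0 1 * b 0 1) * q 0 0 k - (a 0 1 * b 0 0) * q 0 1 k
          - (a 0 0 * b 0 1) * q 1 0 k + (a 0 0 * b 0 0) * q 1 1 k
      rcases mul_eq_zero.1 q2 with h1 | h1
      · exact absurd h1 hAB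
      · rcases mul_eq_zero.1 h1 with h2 | h2
        · exact absurd h2 hSne
        · linear_combination h2
    refine Or.inl ⟨fun i j k => ?_, fun i j k => ?_⟩
    · have e : (S * G) * (x i * (y j * z k)) = (S * G) * (a 0 i * (b 0 j * c 0 k)) := by
        linear_combination (G * z k) * hE0' i j + (G * (a 0 i * b 0 j)) * key1 k
      exact mul_left_cancel₀ (mul_ne_zero hSne hG) e
    · have e : (T' * G) * (x' i * (y' j * z' k)) = (T' * G) * (a 1 i * (b 1 j * c 1 k)) := by
        linear_combination (G * z' k) * hE1' i j + (G * (a 1 i * b 1 j)) * key2 k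
      exact mul_left_cancel₀ (mul_ne_zero hT'ne hG) e

/-- The generic polynomial: product of the three 2×2 "determinants". -/
noncomputable def Pgen : MvPolynomial (Fin 2 × (Fin 2 ⊕ Fin 2 ⊕ Fin 3)) ℂ :=
  (MvPolynomial.X (0, Sum.inl 0) * MvPolynomial.X (1, Sum.inl 1)
      - MvPolynomial.X (0, Sum.inl 1) * MvPolynomial.X (1, Sum.inl 0))
    * ((MvPolynomial.X (0, Sum.inr (Sum.inl 0)) * MvPolynomial.X (1, Sum.inr (Sum.inl 1))
      - MvPolynomial.X (0, Sum.inr (Sum.inl 1)) * MvPolynomial.X (1, Sum.inr (Sum.inl 0)))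
    * (MvPolynomial.X (0, Sum.inr (Sum.inr 0)) * MvPolynomial.X (1, Sum.inr (Sum.inr 1))
      - MvPolynomial.X (0, Sum.inr (Sum.inr 1)) * MvPolynomial.X (1, Sum.inr (Sum.inr 0))))

lemma evalPgen (a b : Fin 2 → Fin 2 → ℂ) (c : Fin 2 → Fin 3 → ℂ) :
    MvPolynomial.eval (fun p => Sum.elim (a p.1) (Sum.elim (b p.1) (c p.1)) p.2) Pgen
      = (a 0 0 * a 1 1 - a 0 1 * a 1 0) * ((b 0 0 * b 1 1 - b 0 1 * b 1 0)
        * (c 0 0 * c 1 1 - c 0 1 * c 1 0)) := by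
  simp [Pgen]

lemma Pgen_ne_zero : Pgen ≠ 0 := by
  intro h0
  have := evalPgen (fun i j => if i = j then 1 else 0) (fun i j => if i = j then 1 else 0)
    (fun i j => if (i : ℕ) = (j : ℕ) then 1 else 0)
  rw [h0] at this
  simp at this

theorem generic_rank_two_identifiable_P1_P1_P2 :
    ∃ P : MvPolynomial (Fin 2 × (Fin 2 ⊕ Fin 2 ⊕ Fin 3)) ℂ, P ≠ 0 ∧
      ∀ (a b : Fin 2 → Fin 2 → ℂ) (c : Fin 2 → Fin 3 → ℂ),
        MvPolynomial.eval
          (fun p => Sum.elim (a p.1) (Sum.elim (b p.1) (c p.1)) p.2) P ≠ 0 →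
        ∀ D : Multiset TripleTensor,
          (Multiset.card D = 2 ∧ (∀ t ∈ D, t ≠ 0 ∧ TripleDecomposable t) ∧
            D.sum = ∑ i : Fin 2, a i ⊗ₜ[ℂ] (b i ⊗ₜ[ℂ] c i)) →
          D = {a 0 ⊗ₜ[ℂ] (b 0 ⊗ₜ[ℂ] c 0), a 1 ⊗ₜ[ℂ] (b 1 ⊗ₜ[ℂ] c 1)} := by
  refine ⟨Pgen, Pgen_ne_zero, ?_⟩
  intro a b c hP D ⟨hcard, hdec, hsum⟩
  rw [evalPgen] at hP
  have hA : a 0 0 * a 1 1 - a 0 1 * a 1 0 ≠ 0 := fun e => hP (by rw [e]; ring)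
  have hB : b 0 0 * b 1 1 - b 0 1 * b 1 0 ≠ 0 := fun e => hP (by rw [e]; ring)
  have hG : c 0 0 * c 1 1 - c 0 1 * c 1 0 ≠ 0 := fun e => hP (by rw [e]; ring)
  obtain ⟨t1, t2, rfl⟩ := Multiset.card_eq_two.1 hcard
  obtain ⟨x, y, z, ht1⟩ := (hdec t1 (by simp)).2
  obtain ⟨x', y', z', ht2⟩ := (hdec t2 (by simp)).2
  rw [Fin.sum_univ_two] at hsum
  have hsum' : x ⊗ₜ[ℂ] (y ⊗ₜ[ℂ] z) + x' ⊗ₜ[ℂ] (y' ⊗ₜ[ℂ] z')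
      = a 0 ⊗ₜ[ℂ] (b 0 ⊗ₜ[ℂ] c 0) + a 1 ⊗ₜ[ℂ] (b 1 ⊗ₜ[ℂ] c 1) := by
    rw [← ht1, ← ht2, ← hsum]
    simp
  have h : ∀ (i j : Fin 2) (k : Fin 3), x i * (y j * z k) + x' i * (y' j * z' k)
      = a 0 i * (b 0 j * c 0 k) + a 1 i * (b 1 j * c 1 k) := by
    intro i j k
    have h2 := congrArg (fun t => TB.repr t (i, j, k)) hsum'
    simp only [TB_repr_add, TB_repr_tmul] at h2
    exact h2
  rcases key_scalar a b c hA hB hG x y x' y' z z' h with ⟨h1, h2⟩ | ⟨h1, h2⟩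
  · rw [ht1, ht2, tmul_eq_of_coords _ _ _ _ _ _ h1, tmul_eq_of_coords _ _ _ _ _ _ h2]
  · rw [ht1, ht2, tmul_eq_of_coords _ _ _ _ _ _ h1, tmul_eq_of_coords _ _ _ _ _ _ h2]
    exact Multiset.pair_comm _ _
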